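/- Let 𝒜 be a C*-algebra, X a Hilbert 𝒜-module, and μ a probability measure on a measurable space Ω. For all f, g ∈ L₂(Ω, X), ‖∫_Ω ⟨f(t), g(t)⟩ dμ(t) − ⟨∫_Ω f(t) dμ(t), ∫_Ω g(t) dμ(t)⟩‖² ≤ ‖∫_Ω |f(t)|² dμ(t) − |∫_Ω f(t) dμ(t)|²‖ · ‖∫_Ω |g(t)|² dμ(t) − |∫_Ω g(t) dμ(t)|²‖. -/

import Mathlib

open MeasureTheory
open scoped RightActions

/-- The `CStarModule` class as it stood in Mathlib of December 2024: a *right* Hilbert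
C⋆-module, with `SMul Aᵐᵒᵖ E` and `⟪x, y <• a⟫ = ⟪x, y⟫ * a`. (Mathlib's current `CStarModule`
uses a left action `SMul A E` with `⟪x, a • y⟫ = a * ⟪x, y⟫`.) -/
class RightCStarModule (A E : Type*) [NonUnitalSemiring A] [StarRing A] [Module ℂ A]
    [AddCommGroup E] [Module ℂ E] [PartialOrder A] [SMul Aᵐᵒᵖ E] [Norm A] [Norm E]
    extends Inner A E where
  inner_add_right {x} {y} {z} : inner x (y + z) = inner x y + inner x z
  inner_self_nonneg {x} : 0 ≤ inner x x
  inner_self {x} : inner x x = 0 ↔ x = 0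
  inner_op_smul_right {a : A} {x y : E} : inner x (y <• a) = inner x y * a
  inner_smul_right_complex {z : ℂ} {x} {y} : inner x (z • y) = z • inner x y
  star_inner x y : star (inner x y) = inner y x
  norm_eq_sqrt_norm_inner_self x : ‖x‖ = √‖inner x x‖

attribute [simp] RightCStarModule.inner_add_right RightCStarModule.star_inner
  RightCStarModule.inner_op_smul_right RightCStarModule.inner_smul_right_complex

namespace RightCStarModule

section general

variable {A E : Type*} [NonUnitalCStarAlgebra A] [PartialOrder A] [AddCommGroup E]
  [Module ℂ E] [SMul Aᵐᵒᵖ E] [Norm E] [RightCStarModule A E]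

local notation "⟪" x ", " y "⟫" => inner A x y

@[simp]
lemma inner_add_left {x y z : E} : ⟪x + y, z⟫ = ⟪x, z⟫ + ⟪y, z⟫ := by
  rw [← star_star (r := ⟪x + y, z⟫)]
  simp only [inner_add_right, star_add, star_inner]

@[simp]
lemma inner_op_smul_left {a : A} {x y : E} : ⟪x <• a, y⟫ = star a * ⟪x, y⟫ := by
  rw [← star_inner]; simp

@[simp]
lemma inner_smul_left_complex {z : ℂ} {x y : E} : ⟪z • x, y⟫ = star z • ⟪x, y⟫ := by
  rw [← star_inner]
  simp

@[simp]
lemma inner_smul_left_real {z : ℝ} {x y : E} : ⟪z • x, y⟫ = z • ⟪x, y⟫ := by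
  have h₁ : z • x = (z : ℂ) • x := by simp
  rw [h₁, ← star_inner, inner_smul_right_complex]
  simp

@[simp]
lemma inner_smul_right_real {z : ℝ} {x y : E} : ⟪x, z • y⟫ = z • ⟪x, y⟫ := by
  have h₁ : z • y = (z : ℂ) • y := by simp
  rw [h₁, ← star_inner, inner_smul_left_complex]
  simp

/-- The function `⟨x, y⟩ ↦ ⟪x, y⟫` bundled as a sesquilinear map. -/
def innerₛₗ : E →ₗ⋆[ℂ] E →ₗ[ℂ] A where
  toFun x := { toFun := fun y => ⟪x, y⟫
               map_add' := fun z y => by simp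
               map_smul' := fun z y => by simp }
  map_add' z y := by ext; simp
  map_smul' z y := by ext; simp

lemma innerₛₗ_apply {x y : E} : innerₛₗ x y = ⟪x, y⟫ := rfl

@[simp] lemma inner_zero_right {x : E} : ⟪x, 0⟫ = 0 := by simp [← innerₛₗ_apply]
@[simp] lemma inner_zero_left {x : E} : ⟪0, x⟫ = 0 := by simp [← innerₛₗ_apply]
@[simp] lemma inner_sub_right {x y z : E} : ⟪x, y - z⟫ = ⟪x, y⟫ - ⟪x, z⟫ := by
  simp [← innerₛₗ_apply]
@[simp] lemma inner_sub_left {x y z : E} : ⟪x - y, z⟫ = ⟪x, z⟫ - ⟪y, z⟫ := by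
  simp [← innerₛₗ_apply]

variable (A) in
lemma norm_sq_eq {x : E} : ‖x‖ ^ 2 = ‖⟪x, x⟫‖ := by
  simp [norm_eq_sqrt_norm_inner_self (A := A)]

end general

section NormedAddCommGroup

variable {A E : Type*} [NonUnitalCStarAlgebra A] [PartialOrder A] [StarOrderedRing A]
  [SMul Aᵐᵒᵖ E] [NormedAddCommGroup E] [NormedSpace ℂ E] [RightCStarModule A E]

local notation "⟪" x ", " y "⟫" => inner A x y

lemma inner_swap_mul_inner_le {x y : E} : ⟪y, x⟫ * ⟪x, y⟫ ≤ ‖x‖ ^ 2 • ⟪y, y⟫ := by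
  rcases eq_or_ne x 0 with h | h
  · simp [h, norm_zero]
  · have h₁ : ∀ (a : A),
        (0 : A) ≤ ‖x‖ ^ 2 • (star a * a) - ‖x‖ ^ 2 • (star a * ⟪x, y⟫)
                  - ‖x‖ ^ 2 • (⟪y, x⟫ * a) + ‖x‖ ^ 2 • (‖x‖ ^ 2 • ⟪y, y⟫) := fun a => by
      calc (0 : A) ≤ ⟪x <• a - ‖x‖ ^ 2 • y, x <• a - ‖x‖ ^ 2 • y⟫ := by exact inner_self_nonneg
            _ = star a * ⟪x, x⟫ * a - ‖x‖ ^ 2 • (star a * ⟪x, y⟫)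
                  - ‖x‖ ^ 2 • (⟪y, x⟫ * a) + ‖x‖ ^ 2 • (‖x‖ ^ 2 • ⟪y, y⟫) := by
                      simp only [inner_sub_right, inner_op_smul_right, inner_sub_left,
                        inner_op_smul_left, inner_smul_left_real, mul_sub, sub_mul,
                        mul_smul_comm, smul_mul_assoc,
                        inner_smul_right_real, smul_sub, mul_assoc]
                      abel
            _ ≤ ‖x‖ ^ 2 • (star a * a) - ‖x‖ ^ 2 • (star a * ⟪x, y⟫)
                  - ‖x‖ ^ 2 • (⟪y, x⟫ * a) + ‖x‖ ^ 2 • (‖x‖ ^ 2 • ⟪y, y⟫) := by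
                      gcongr
                      calc _ ≤ ‖⟪x, x⟫‖ • (star a * a) :=
                          CStarAlgebra.star_left_conjugate_le_norm_smul (star_inner x x)
                        _ = ‖x‖ ^ 2 • (star a * a) := by rw [norm_sq_eq A]
    specialize h₁ ⟪x, y⟫
    simp only [star_inner, sub_self, zero_sub, le_neg_add_iff_add_le, add_zero] at h₁
    rwa [smul_le_smul_iff_of_pos_left (pow_pos (norm_pos_iff.mpr h) _)] at h₁

variable (E) in
lemma norm_inner_le {x y : E} : ‖⟪x, y⟫‖ ≤ ‖x‖ * ‖y‖ := by
  have := calc ‖⟪x, y⟫‖ ^ 2 = ‖⟪y, x⟫ * ⟪x, y⟫‖ := by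
                rw [← star_inner x, CStarRing.norm_star_mul_self, pow_two]
    _ ≤ ‖‖x‖ ^ 2 • ⟪y, y⟫‖ := by
                refine CStarAlgebra.norm_le_norm_of_nonneg_of_le ?_ inner_swap_mul_inner_le
                rw [← star_inner x]
                exact star_mul_self_nonneg ⟪x, y⟫
    _ = ‖x‖ ^ 2 * ‖⟪y, y⟫‖ := by simp [norm_smul]
    _ = ‖x‖ ^ 2 * ‖y‖ ^ 2 := by rw [norm_sq_eq A (x := y)]
    _ = (‖x‖ * ‖y‖) ^ 2 := by simp only [mul_pow]
  refine (pow_le_pow_iff_left₀ (norm_nonneg ⟪x, y⟫) ?_ (by simp)).mp this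
  exact mul_nonneg (norm_nonneg _) (norm_nonneg _)

/-- The function `⟨x, y⟩ ↦ ⟪x, y⟫` bundled as a continuous sesquilinear map. -/
noncomputable def innerSL : E →L⋆[ℂ] E →L[ℂ] A :=
  LinearMap.mkContinuous₂ (innerₛₗ : E →ₗ⋆[ℂ] E →ₗ[ℂ] A) 1 <| fun x y => by
    simp [innerₛₗ_apply, norm_inner_le E]

lemma innerSL_apply {x y : E} : innerSL x y = inner A x y := rfl

lemma continuous_inner : Continuous (fun x : E × E => inner A x.1 x.2) := by
  simp_rw [← innerSL_apply]
  fun_prop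

end NormedAddCommGroup

end RightCStarModule

section helpers

variable {A : Type*} [NonUnitalCStarAlgebra A] [PartialOrder A] [StarOrderedRing A]
  {X : Type*} [NormedAddCommGroup X] [NormedSpace ℂ X] [SMul Aᵐᵒᵖ X] [RightCStarModule A X]

local notation "⟪" x ", " y "⟫" => inner A x y

lemma my_ext {w w' : X} (h : ∀ z : X, ⟪z, w⟫ = ⟪z, w'⟫) : w = w' := by
  have h2 : ⟪w - w', w - w'⟫ = 0 := by
    rw [RightCStarModule.inner_sub_right, h (w - w'), sub_self]
  exact sub_eq_zero.mp (RightCStarModule.inner_self.mp h2)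

lemma my_op_smul_add (x y : X) (b : A) : (x + y) <• b = x <• b + y <• b := by
  refine my_ext (A := A) fun z => ?_
  simp [mul_add, add_mul]

lemma my_op_smul_real (r : ℝ) (x : X) (b : A) : (r • x) <• b = r • (x <• b) := by
  refine my_ext (A := A) fun z => ?_
  simp [smul_mul_assoc]

lemma my_norm_op_smul_le (x : X) (b : A) : ‖x <• b‖ ≤ ‖x‖ * ‖b‖ := by
  have h : ‖x <• b‖ ^ 2 ≤ (‖x‖ * ‖b‖) ^ 2 := by
    rw [RightCStarModule.norm_sq_eq A]
    calc ‖⟪x <• b, x <• b⟫‖ = ‖star b * ⟪x, x⟫ * b‖ := by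
            rw [RightCStarModule.inner_op_smul_right, RightCStarModule.inner_op_smul_left, mul_assoc]
      _ ≤ ‖star b * ⟪x, x⟫‖ * ‖b‖ := norm_mul_le _ _
      _ ≤ ‖star b‖ * ‖⟪x, x⟫‖ * ‖b‖ := by gcongr; exact norm_mul_le _ _
      _ = ‖b‖ * ‖x‖ ^ 2 * ‖b‖ := by rw [norm_star, RightCStarModule.norm_sq_eq A]
      _ = (‖x‖ * ‖b‖) ^ 2 := by ring
  exact (pow_le_pow_iff_left₀ (norm_nonneg _) (by positivity) (by norm_num)).mp h

/-- Right multiplication by `b : A` on `X` as a real continuous linear map. -/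
noncomputable def myOpSmul (b : A) : X →L[ℝ] X :=
  LinearMap.mkContinuous
    { toFun := fun x => x <• b
      map_add' := fun x y => my_op_smul_add (A := A) x y b
      map_smul' := fun r x => my_op_smul_real r x b } ‖b‖
    (fun x => by rw [mul_comm]; exact my_norm_op_smul_le x b)

@[simp] lemma myOpSmul_apply (b : A) (x : X) : myOpSmul b x = x <• b := rfl

end helpers


section int

set_option linter.unusedSectionVars false

variable {A : Type*} [NonUnitalCStarAlgebra A] [PartialOrder A] [StarOrderedRing A]
  {X : Type*} [NormedAddCommGroup X] [NormedSpace ℂ X] [SMul Aᵐᵒᵖ X] [RightCStarModule A X]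
  {Ω : Type*} [MeasurableSpace Ω] {μ : Measure Ω}

local notation "⟪" x ", " y "⟫" => inner A x y

lemma my_integrable_inner {f g : Ω → X} (hf : MemLp f 2 μ) (hg : MemLp g 2 μ) :
    Integrable (fun t => ⟪f t, g t⟫) μ := by
  have h2f := (memLp_two_iff_integrable_sq_norm hf.1).mp hf
  have h2g := (memLp_two_iff_integrable_sq_norm hg.1).mp hg
  refine (h2f.add h2g).mono'
    (RightCStarModule.continuous_inner.comp_aestronglyMeasurable (hf.1.prodMk hg.1))
    (.of_forall fun t => ?_)
  have h1 : ‖(⟪f t, g t⟫ : A)‖ ≤ ‖f t‖ * ‖g t‖ := RightCStarModule.norm_inner_le X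
  have h2 : (0:ℝ) ≤ (‖f t‖ - ‖g t‖) ^ 2 := sq_nonneg _
  simp only [Pi.add_apply]
  nlinarith [h1, h2]

lemma my_integral_inner_self_nonneg [IsProbabilityMeasure μ] {f : Ω → X} (hf : MemLp f 2 μ) :
    0 ≤ ∫ t, ⟪f t, f t⟫ ∂μ := by
  have hconv : Convex ℝ {a : A | 0 ≤ a} := fun x hx y hy a b ha hb _ =>
    add_nonneg (smul_nonneg ha hx) (smul_nonneg hb hy)
  exact hconv.integral_mem CStarAlgebra.isClosed_nonneg
    (.of_forall fun t => RightCStarModule.inner_self_nonneg) (my_integrable_inner hf hf)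

lemma my_memLp_op_smul {f : Ω → X} (hf : MemLp f 2 μ) (b : A) :
    MemLp (fun t => f t <• b) 2 μ := by
  simpa [Function.comp_def] using (myOpSmul (X := X) b).comp_memLp' hf

lemma my_integral_star {h : Ω → A} (hh : Integrable h μ) :
    ∫ t, star (h t) ∂μ = star (∫ t, h t ∂μ) :=
  (starL' ℝ : A ≃L[ℝ] A).toContinuousLinearMap.integral_comp_comm hh

end int

section schwarz

set_option linter.unusedSectionVars false

variable {A : Type*} [NonUnitalCStarAlgebra A] [PartialOrder A] [StarOrderedRing A]
  {X : Type*} [NormedAddCommGroup X] [NormedSpace ℂ X] [SMul Aᵐᵒᵖ X] [RightCStarModule A X]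
  {Ω : Type*} [MeasurableSpace Ω] {μ : Measure Ω}

local notation "⟪" x ", " y "⟫" => inner A x y

lemma my_schwarz [IsProbabilityMeasure μ] {F G : Ω → X} (hF : MemLp F 2 μ) (hG : MemLp G 2 μ) :
    ‖∫ t, ⟪F t, G t⟫ ∂μ‖ ^ 2 ≤ ‖∫ t, ⟪F t, F t⟫ ∂μ‖ * ‖∫ t, ⟪G t, G t⟫ ∂μ‖ := by
  set b := ∫ t, ⟪F t, G t⟫ ∂μ with hb
  set P := ∫ t, ⟪F t, F t⟫ ∂μ with hP
  set Q := ∫ t, ⟪G t, G t⟫ ∂μ with hQ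
  have hFF := my_integrable_inner (A := A) hF hF
  have hFG := my_integrable_inner (A := A) hF hG
  have hGF := my_integrable_inner (A := A) hG hF
  have hGG := my_integrable_inner (A := A) hG hG
  have hPsa : IsSelfAdjoint P := by
    rw [IsSelfAdjoint, ← my_integral_star hFF]; simp only [RightCStarModule.star_inner]; rfl
  have hstarb : star b = ∫ t, ⟪G t, F t⟫ ∂μ := by
    rw [hb, ← my_integral_star hFG]; simp only [RightCStarModule.star_inner]
  have key : ∀ c : ℝ, 0 < c → ‖P‖ ≤ c → star b * b ≤ c • Q := by
    intro c hc hPc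
    have hH : MemLp (fun t => F t <• b - c • G t) 2 μ :=
      (my_memLp_op_smul hF b).sub (hG.const_smul c)
    have h0 : (0 : A) ≤ ∫ t, ⟪F t <• b - c • G t, F t <• b - c • G t⟫ ∂μ :=
      my_integral_inner_self_nonneg hH
    have hpt : ∀ t : Ω, (⟪F t <• b - c • G t, F t <• b - c • G t⟫ : A)
        = star b * (⟪F t, F t⟫ * b) - c • (⟪G t, F t⟫ * b) - c • (star b * ⟪F t, G t⟫)
          + (c * c) • ⟪G t, G t⟫ := by
      intro t
      simp only [RightCStarModule.inner_sub_right, RightCStarModule.inner_sub_left,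
        RightCStarModule.inner_op_smul_right, RightCStarModule.inner_op_smul_left,
        RightCStarModule.inner_smul_left_real, RightCStarModule.inner_smul_right_real,
        smul_mul_assoc, mul_smul_comm, smul_smul, smul_sub, sub_mul, add_mul, mul_sub,
        mul_add, mul_assoc]
      abel
    set L1 : A →L[ℝ] A :=
      (ContinuousLinearMap.mul ℝ A (star b)).comp ((ContinuousLinearMap.mul ℝ A).flip b) with hL1
    set L2 : A →L[ℝ] A := (ContinuousLinearMap.mul ℝ A).flip b with hL2
    set L3 : A →L[ℝ] A := ContinuousLinearMap.mul ℝ A (star b) with hL3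
    have hL1a : ∀ x : A, L1 x = star b * (x * b) := fun x => rfl
    have hL2a : ∀ x : A, L2 x = x * b := fun x => rfl
    have hL3a : ∀ x : A, L3 x = star b * x := fun x => rfl
    have i1 : Integrable (fun t => star b * (⟪F t, F t⟫ * b)) μ := L1.integrable_comp hFF
    have i2 : Integrable (fun t => (⟪G t, F t⟫ : A) * b) μ := L2.integrable_comp hGF
    have i3 : Integrable (fun t => star b * (⟪F t, G t⟫ : A)) μ := L3.integrable_comp hFG
    have i2s : Integrable (fun t => c • ((⟪G t, F t⟫ : A) * b)) μ := i2.smul c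
    have i3s : Integrable (fun t => c • (star b * (⟪F t, G t⟫ : A))) μ := i3.smul c
    have i4s : Integrable (fun t => (c * c) • (⟪G t, G t⟫ : A)) μ := hGG.smul (c * c)
    have e1 : ∫ t, star b * ((⟪F t, F t⟫ : A) * b) ∂μ = star b * (P * b) :=
      L1.integral_comp_comm hFF
    have e2 : ∫ t, (⟪G t, F t⟫ : A) * b ∂μ = (∫ t, ⟪G t, F t⟫ ∂μ) * b :=
      L2.integral_comp_comm hGF
    have e3 : ∫ t, star b * (⟪F t, G t⟫ : A) ∂μ = star b * ∫ t, ⟪F t, G t⟫ ∂μ :=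
      L3.integral_comp_comm hFG
    have hint : ∫ t, ⟪F t <• b - c • G t, F t <• b - c • G t⟫ ∂μ
        = star b * (P * b) - c • (star b * b) - c • (star b * b) + (c * c) • Q := by
      calc ∫ t, ⟪F t <• b - c • G t, F t <• b - c • G t⟫ ∂μ
          = ∫ t, (star b * (⟪F t, F t⟫ * b) - c • (⟪G t, F t⟫ * b)
              - c • (star b * ⟪F t, G t⟫) + (c * c) • ⟪G t, G t⟫) ∂μ := by
            simp only [hpt]
        _ = ((∫ t, star b * (⟪F t, F t⟫ * b) ∂μ) - ∫ t, c • ((⟪G t, F t⟫ : A) * b) ∂μ)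
              - (∫ t, c • (star b * (⟪F t, G t⟫ : A)) ∂μ)
              + ∫ t, (c * c) • (⟪G t, G t⟫ : A) ∂μ := by
            have i12 : Integrable (fun t => star b * ((⟪F t, F t⟫ : A) * b)
                - c • ((⟪G t, F t⟫ : A) * b)) μ := i1.sub i2s
            have i123 : Integrable (fun t => star b * ((⟪F t, F t⟫ : A) * b)
                - c • ((⟪G t, F t⟫ : A) * b) - c • (star b * (⟪F t, G t⟫ : A))) μ := i12.sub i3s
            rw [integral_add i123 i4s, integral_sub i12 i3s, integral_sub i1 i2s]
        _ = star b * (P * b) - c • ((∫ t, ⟪G t, F t⟫ ∂μ) * b)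
              - c • (star b * ∫ t, ⟪F t, G t⟫ ∂μ) + (c * c) • Q := by
            rw [integral_smul, integral_smul, integral_smul, e1, e2, e3]
        _ = star b * (P * b) - c • (star b * b) - c • (star b * b) + (c * c) • Q := by
            rw [← hstarb, ← hb]
    rw [hint] at h0
    have hconj : star b * (P * b) ≤ c • (star b * b) := by
      rw [← mul_assoc]
      exact (CStarAlgebra.star_left_conjugate_le_norm_smul hPsa).trans
        (smul_le_smul_of_nonneg_right hPc (star_mul_self_nonneg b))
    have h1 : c • (star b * b) + c • (star b * b)
        ≤ star b * (P * b) + (c * c) • Q := by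
      rwa [sub_sub, sub_add_eq_add_sub, sub_nonneg] at h0
    have h3 : c • (star b * b) ≤ (c * c) • Q := by
      have h2 := h1.trans (add_le_add_left hconj _)
      exact le_of_add_le_add_left h2
    rw [mul_smul] at h3
    exact (smul_le_smul_iff_of_pos_left hc).mp h3
  have heps : ∀ ε : ℝ, 0 < ε → ‖b‖ ^ 2 ≤ (‖P‖ + ε) * ‖Q‖ := by
    intro ε hε
    have hc := key (‖P‖ + ε) (by positivity) (le_add_of_nonneg_right hε.le)
    calc ‖b‖ ^ 2 = ‖star b * b‖ := by rw [CStarRing.norm_star_mul_self, sq]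
      _ ≤ ‖(‖P‖ + ε) • Q‖ :=
          CStarAlgebra.norm_le_norm_of_nonneg_of_le (star_mul_self_nonneg b) hc
      _ = (‖P‖ + ε) * ‖Q‖ := by
          rw [norm_smul, Real.norm_eq_abs, abs_of_pos (by positivity)]
  refine le_of_forall_pos_le_add fun ε' hε' => ?_
  rcases eq_or_lt_of_le (norm_nonneg Q) with hQ0 | hQ0
  · have h := heps 1 one_pos
    rw [← hQ0] at h ⊢
    simp only [mul_zero] at h ⊢
    linarith
  · have h := heps (ε' / ‖Q‖) (by positivity)
    calc ‖b‖ ^ 2 ≤ (‖P‖ + ε' / ‖Q‖) * ‖Q‖ := h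
      _ = ‖P‖ * ‖Q‖ + ε' := by
          rw [add_mul, div_mul_cancel₀ _ (ne_of_gt hQ0)]

end schwarz

section main

set_option linter.unusedSectionVars false

variable {A : Type*} [NonUnitalCStarAlgebra A] [PartialOrder A] [StarOrderedRing A]
  {X : Type*} [NormedAddCommGroup X] [NormedSpace ℂ X] [SMul Aᵐᵒᵖ X] [RightCStarModule A X]
  [CompleteSpace X]
  {Ω : Type*} [MeasurableSpace Ω] {μ : Measure Ω}

local notation "⟪" x ", " y "⟫" => inner A x y

lemma my_centering [IsProbabilityMeasure μ] {u v : Ω → X} (hu : MemLp u 2 μ)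
    (hv : MemLp v 2 μ) :
    ∫ t, ⟪u t - ∫ s, u s ∂μ, v t - ∫ s, v s ∂μ⟫ ∂μ
      = (∫ t, ⟪u t, v t⟫ ∂μ) - ⟪∫ t, u t ∂μ, ∫ t, v t ∂μ⟫ := by
  set p := ∫ s, u s ∂μ with hp
  set q := ∫ s, v s ∂μ with hq
  have hu1 : Integrable u μ := hu.integrable one_le_two
  have hv1 : Integrable v μ := hv.integrable one_le_two
  have iuv := my_integrable_inner (A := A) hu hv
  set K : X →L[ℝ] A :=
    (starL' ℝ : A ≃L[ℝ] A).toContinuousLinearMap.comp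
      ((RightCStarModule.innerSL (A := A) q).restrictScalars ℝ) with hK
  have iuq : Integrable (fun t => (⟪u t, q⟫ : A)) μ := by
    have h : Integrable (fun t => star (⟪q, u t⟫ : A)) μ := K.integrable_comp hu1
    simpa only [RightCStarModule.star_inner] using h
  have epq : ∫ t, (⟪u t, q⟫ : A) ∂μ = ⟪p, q⟫ := by
    have h : ∫ t, star (⟪q, u t⟫ : A) ∂μ = star (⟪q, p⟫ : A) := K.integral_comp_comm hu1
    simpa only [RightCStarModule.star_inner] using h
  have ipv : Integrable (fun t => (⟪p, v t⟫ : A)) μ :=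
    ((RightCStarModule.innerSL (A := A) p).restrictScalars ℝ).integrable_comp hv1
  have epv : ∫ t, (⟪p, v t⟫ : A) ∂μ = ⟪p, q⟫ :=
    ((RightCStarModule.innerSL (A := A) p).restrictScalars ℝ).integral_comp_comm hv1
  have ipq : Integrable (fun _ : Ω => (⟪p, q⟫ : A)) μ := integrable_const _
  have hpt : ∀ t : Ω, (⟪u t - p, v t - q⟫ : A)
      = ⟪u t, v t⟫ - ⟪u t, q⟫ - ⟪p, v t⟫ + ⟪p, q⟫ := by
    intro t
    simp only [RightCStarModule.inner_sub_left, RightCStarModule.inner_sub_right]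
    abel
  have i12 : Integrable (fun t => (⟪u t, v t⟫ : A) - ⟪u t, q⟫) μ := iuv.sub iuq
  have i123 : Integrable (fun t => (⟪u t, v t⟫ : A) - ⟪u t, q⟫ - ⟪p, v t⟫) μ := i12.sub ipv
  calc ∫ t, (⟪u t - p, v t - q⟫ : A) ∂μ
      = ∫ t, ((⟪u t, v t⟫ : A) - ⟪u t, q⟫ - ⟪p, v t⟫ + ⟪p, q⟫) ∂μ := by simp only [hpt]
    _ = (∫ t, (⟪u t, v t⟫ : A) ∂μ) - (∫ t, (⟪u t, q⟫ : A) ∂μ) - (∫ t, (⟪p, v t⟫ : A) ∂μ)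
          + ∫ _, (⟪p, q⟫ : A) ∂μ := by
        rw [integral_add i123 ipq, integral_sub i12 ipv, integral_sub iuv iuq]
    _ = (∫ t, (⟪u t, v t⟫ : A) ∂μ) - ⟪p, q⟫ - ⟪p, q⟫ + ⟪p, q⟫ := by
        rw [epq, epv, integral_const]; simp
    _ = (∫ t, (⟪u t, v t⟫ : A) ∂μ) - ⟪p, q⟫ := by abel

end main

/-- Schwarz inequality for the Grüss functional on `L₂(Ω, X)` for a Hilbert C*-module `X`. -/
theorem gruss_functional_schwarz {A : Type*} [NonUnitalCStarAlgebra A]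
    [PartialOrder A] [StarOrderedRing A]
    {X : Type*} [NormedAddCommGroup X] [NormedSpace ℂ X] [SMul Aᵐᵒᵖ X] [RightCStarModule A X]
    [CompleteSpace X]
    {Ω : Type*} [MeasurableSpace Ω] (μ : Measure Ω) [IsProbabilityMeasure μ]
    (f g : Ω → X) (hf : MemLp f 2 μ) (hg : MemLp g 2 μ) :
    ‖(∫ t, (inner A (f t) (g t) : A) ∂μ) - (inner A (∫ t, f t ∂μ) (∫ t, g t ∂μ) : A)‖ ^ 2 ≤
      ‖(∫ t, (inner A (f t) (f t) : A) ∂μ) - (inner A (∫ t, f t ∂μ) (∫ t, f t ∂μ) : A)‖ *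
        ‖(∫ t, (inner A (g t) (g t) : A) ∂μ) - (inner A (∫ t, g t ∂μ) (∫ t, g t ∂μ) : A)‖ := by
  have hfc : MemLp (fun t => f t - ∫ s, f s ∂μ) 2 μ := hf.sub (memLp_const _)
  have hgc : MemLp (fun t => g t - ∫ s, g s ∂μ) 2 μ := hg.sub (memLp_const _)
  rw [← my_centering hf hg, ← my_centering hf hf, ← my_centering hg hg]
  exact my_schwarz hfc hgc
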